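/- The angle subtended at the point A = (cos θ sin φ, sin θ sin φ, cos φ) on the unit sphere by the segment from (0,-1/2,0) to (0,1/2,0) equals arctan((4/3)·√(1 - sin(θ)² sin(φ)²)). -/

import Mathlib

open Real EuclideanGeometry

theorem sphere_keyhole_angle (θ φ : ℝ) :
    EuclideanGeometry.angle
        ((WithLp.equiv 2 (Fin 3 → ℝ)).symm ![0, 1 / 2, 0])
        ((WithLp.equiv 2 (Fin 3 → ℝ)).symm
          ![Real.cos θ * Real.sin φ, Real.sin θ * Real.sin φ, Real.cos φ])
        ((WithLp.equiv 2 (Fin 3 → ℝ)).symm ![0, -(1 / 2), 0]) =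
      arctan ((4 / 3) * Real.sqrt (1 - Real.sin θ ^ 2 * Real.sin φ ^ 2)) := by
  have h1 : Real.sin θ ^ 2 + Real.cos θ ^ 2 = 1 := sin_sq_add_cos_sq θ
  have h2 : Real.sin φ ^ 2 + Real.cos φ ^ 2 = 1 := sin_sq_add_cos_sq φ
  simp only [EuclideanGeometry.angle, InnerProductGeometry.angle, vsub_eq_sub,
    PiLp.inner_apply, PiLp.sub_apply, WithLp.equiv_symm_apply, PiLp.toLp_apply,
    EuclideanSpace.norm_eq, Fin.sum_univ_three,
    Matrix.cons_val_zero, Matrix.cons_val_one, Matrix.head_cons, Matrix.cons_val_two,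
    Matrix.tail_cons, RCLike.inner_apply, conj_trivial, Real.norm_eq_abs, sq_abs]
  have hinner : (0 - Real.cos θ * Real.sin φ) * (0 - Real.cos θ * Real.sin φ) +
      (-(1 / 2) - Real.sin θ * Real.sin φ) * (1 / 2 - Real.sin θ * Real.sin φ) +
      (0 - Real.cos φ) * (0 - Real.cos φ) = 3 / 4 := by
    linear_combination (Real.sin φ ^ 2) * h1 + h2
  have hN1 : (0 - Real.cos θ * Real.sin φ) ^ 2 + (1 / 2 - Real.sin θ * Real.sin φ) ^ 2 +
      (0 - Real.cos φ) ^ 2 = 5 / 4 - Real.sin θ * Real.sin φ := by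
    linear_combination (Real.sin φ ^ 2) * h1 + h2
  have hN2 : (0 - Real.cos θ * Real.sin φ) ^ 2 + (-(1 / 2) - Real.sin θ * Real.sin φ) ^ 2 +
      (0 - Real.cos φ) ^ 2 = 5 / 4 + Real.sin θ * Real.sin φ := by
    linear_combination (Real.sin φ ^ 2) * h1 + h2
  rw [hinner, hN1, hN2]
  set s := Real.sin θ * Real.sin φ with hs
  have hss : Real.sin θ ^ 2 * Real.sin φ ^ 2 = s ^ 2 := by rw [hs]; ring
  rw [hss]
  have hs2 : s ^ 2 ≤ 1 := by
    have := sq_nonneg (Real.sin θ * Real.cos φ)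
    have := sq_nonneg (Real.cos θ)
    nlinarith
  have hD : (0 : ℝ) < 25 / 16 - s ^ 2 := by nlinarith
  have hm : (0 : ℝ) ≤ 5 / 4 - s := by nlinarith
  have hsq : Real.sqrt (5 / 4 - s) * Real.sqrt (5 / 4 + s) = Real.sqrt (25 / 16 - s ^ 2) := by
    rw [← Real.sqrt_mul hm]
    congr 1
    ring
  rw [hsq]
  have hrt : (0 : ℝ) < Real.sqrt (25 / 16 - s ^ 2) := Real.sqrt_pos.mpr hD
  have hx : (0 : ℝ) < 3 / 4 / Real.sqrt (25 / 16 - s ^ 2) := by positivity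
  rw [Real.arccos_eq_arctan hx]
  congr 1
  have h1s : (0 : ℝ) ≤ 1 - s ^ 2 := by linarith
  have hxx : 1 - (3 / 4 / Real.sqrt (25 / 16 - s ^ 2)) ^ 2 = (1 - s ^ 2) / (25 / 16 - s ^ 2) := by
    rw [div_pow, Real.sq_sqrt hD.le, eq_div_iff hD.ne', sub_mul, div_mul_cancel₀ _ hD.ne']
    ring
  rw [hxx, Real.sqrt_div h1s, div_div_div_cancel_right₀ hrt.ne' _ _]
  ring
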